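/- arXiv:0708.3741 — 3 statements merged into one kernel-verified Lean document; each statement's English description precedes it below -/
import Mathlib

section
/- Let k be a field of characteristic p > 0 and G a finite group. Let w be a finite-dimensional kG-module possessing a direct summand u whose k-dimension is prime to p. Then every kG-module X is w-projective, i.e. every kG-module is a direct summand of w ⊗_k Y (with diagonal G-action) for some kG-module Y. -/
open CategoryTheory MonoidalCategory Limits

/-- `X` is `w`-projective: `X` is a direct summand of `w ⊗ Y` (diagonal `G`-action)
for some `kG`-module `Y`. -/
def IsRelProjective {k G : Type} [Field k] [Group G] (w X : Rep k G) : Prop :=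
  ∃ (Y : Rep k G) (i : X ⟶ w ⊗ Y) (r : w ⊗ Y ⟶ X), i ≫ r = 𝟙 X

set_option maxHeartbeats 1000000
set_option synthInstance.maxHeartbeats 200000
open TensorProduct

section aux
variable {k G : Type} [Field k] [Group G]

/-- invariance of the canonical element -/
theorem canon_invariant (u : Rep k G) [FiniteDimensional k u.V] (g : G) :
    TensorProduct.map (u.ρ g) (u.ρ.dual g)
      (∑ j, (Module.finBasis k u.V) j ⊗ₜ[k] (Module.finBasis k u.V).coord j) =
    ∑ j, (Module.finBasis k u.V) j ⊗ₜ[k] (Module.finBasis k u.V).coord j := by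
  set b := Module.finBasis k u.V
  have hinj : Function.Injective
      ((dualTensorHom k u.V u.V) ∘ₗ (TensorProduct.comm k u.V (Module.Dual k u.V)).toLinearMap) := by
    apply Function.Injective.comp (g := dualTensorHom k u.V u.V)
    · exact (dualTensorHomEquiv k u.V u.V).injective
    · exact (TensorProduct.comm k _ _).injective
  apply hinj
  ext w
  simp only [LinearMap.comp_apply, map_sum, TensorProduct.map_tmul,
    TensorProduct.comm_tmul, LinearEquiv.coe_coe, dualTensorHom_apply,
    LinearMap.coe_sum, Finset.sum_apply, LinearMap.smul_apply]
  have h1 : ∀ v : u.V, (∑ j, (b.coord j v) • b j) = v := fun v => by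
    simpa [Module.Basis.coord_apply] using b.sum_repr v
  have h2 : ∑ j, ((u.ρ.dual g) (b.coord j)) w • (u.ρ g) (b j)
      = u.ρ g (∑ j, b.coord j ((u.ρ g⁻¹) w) • b j) := by
    rw [map_sum]
    refine Finset.sum_congr rfl fun j _ => ?_
    rw [map_smul]
    rfl
  refine h2.trans ?_
  rw [h1, Representation.self_inv_apply]
  exact (h1 w).symm

end aux

private theorem isRelProjective_aux (k G : Type) (p : ℕ) [Field k] [CharP k p]
    (hp : p.Prime) [Group G] [Fintype G]
    (w u : Rep k G) [FiniteDimensional k w.V] [FiniteDimensional k u.V]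
    (hu : ∃ (i : u ⟶ w) (r : w ⟶ u), i ≫ r = 𝟙 u)
    (hdim : ¬ (p ∣ Module.finrank k u.V))
    (X : Rep k G) :
    ∃ (Y : Rep k G) (i : X ⟶ w ⊗ Y) (r : w ⊗ Y ⟶ X), i ≫ r = 𝟙 X := by
  obtain ⟨iu, ru, hiru⟩ := hu
  have hc : (Module.finrank k u.V : k) ≠ 0 := by
    rw [Ne, CharP.cast_eq_zero_iff k p]; exact hdim
  set b := Module.finBasis k u.V with hb
  set c : k := (Module.finrank k u.V : k) with hcdef
  let D : Rep k G := Rep.of u.ρ.dual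
  let Y : Rep k G := D ⊗ X
  let θ : u.V ⊗[k] Module.Dual k u.V := ∑ j, b j ⊗ₜ[k] b.coord j
  let i0 : X.V →ₗ[k] u.V ⊗[k] (Module.Dual k u.V ⊗[k] X.V) :=
    c⁻¹ • ((TensorProduct.assoc k u.V (Module.Dual k u.V) X.V).toLinearMap ∘ₗ
        (TensorProduct.mk k (u.V ⊗[k] Module.Dual k u.V) X.V θ))
  let r0 : u.V ⊗[k] (Module.Dual k u.V ⊗[k] X.V) →ₗ[k] X.V :=
    (TensorProduct.lid k X.V).toLinearMap ∘ₗ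
      TensorProduct.map (contractRight k u.V) LinearMap.id ∘ₗ
      (TensorProduct.assoc k u.V (Module.Dual k u.V) X.V).symm.toLinearMap
  have i0_apply : ∀ x : X.V, i0 x = c⁻¹ • ∑ j, b j ⊗ₜ[k] (b.coord j ⊗ₜ[k] x) := by
    intro x
    simp [i0, θ, TensorProduct.sum_tmul, map_sum]
  have r0_apply : ∀ (v : u.V) (f : Module.Dual k u.V) (x : X.V),
      r0 (v ⊗ₜ[k] (f ⊗ₜ[k] x)) = f v • x := by
    intro v f x
    simp [r0]
  have key : ∀ (g : G) (y : X.V),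
      (∑ j, (u.ρ g) (b j) ⊗ₜ[k] ((u.ρ.dual g) (b.coord j) ⊗ₜ[k] y))
        = ∑ j, b j ⊗ₜ[k] (b.coord j ⊗ₜ[k] y) := by
    intro g y
    have h := congrArg ((TensorProduct.assoc k u.V (Module.Dual k u.V) X.V).toLinearMap ∘ₗ
      (TensorProduct.mk k (u.V ⊗[k] Module.Dual k u.V) X.V).flip y) (canon_invariant u g)
    simpa only [θ, LinearMap.comp_apply, map_sum, TensorProduct.map_tmul,
      LinearMap.flip_apply, TensorProduct.mk_apply, TensorProduct.assoc_tmul,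
      LinearEquiv.coe_coe] using h
  have hri : ∀ x : X.V, r0 (i0 x) = x := by
    intro x
    rw [i0_apply, map_smul, map_sum]
    have h3 : ∀ j, r0 (b j ⊗ₜ[k] (b.coord j ⊗ₜ[k] x)) = x := fun j => by
      rw [r0_apply, Module.Basis.coord_apply, Module.Basis.repr_self, Finsupp.single_eq_same, one_smul]
    simp only [h3, Finset.sum_const, Finset.card_univ, Fintype.card_fin]
    rw [hcdef, ← Nat.cast_smul_eq_nsmul k, inv_smul_smul₀ hc]
  have icomm : ∀ g : G, TensorProduct.map (u.ρ g) (TensorProduct.map (u.ρ.dual g) (X.ρ g)) ∘ₗ i0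
      = i0 ∘ₗ X.ρ g := by
    intro g
    apply LinearMap.ext; intro x
    show TensorProduct.map (u.ρ g) (TensorProduct.map (u.ρ.dual g) (X.ρ g)) (i0 x)
      = i0 ((X.ρ g) x)
    rw [i0_apply, i0_apply, map_smul, map_sum]
    simp only [TensorProduct.map_tmul]
    rw [key g (X.ρ g x)]
  have rcomm : ∀ g : G, X.ρ g ∘ₗ r0
      = r0 ∘ₗ TensorProduct.map (u.ρ g) (TensorProduct.map (u.ρ.dual g) (X.ρ g)) := by
    intro g
    apply TensorProduct.ext'
    intro v y
    induction y using TensorProduct.induction_on with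
    | zero => simp
    | tmul f x =>
      show (X.ρ g) (r0 (v ⊗ₜ[k] (f ⊗ₜ[k] x)))
        = r0 (TensorProduct.map (u.ρ g) (TensorProduct.map (u.ρ.dual g) (X.ρ g))
            (v ⊗ₜ[k] (f ⊗ₜ[k] x)))
      rw [r0_apply, map_smul, TensorProduct.map_tmul, TensorProduct.map_tmul, r0_apply]
      congr 1
      rw [Representation.dual_apply, Module.Dual.transpose_apply, LinearMap.comp_apply]
      congr 1
      show v = (u.ρ g⁻¹ * u.ρ g) v
      rw [← map_mul, inv_mul_cancel, map_one, Module.End.one_apply]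
    | add y₁ y₂ h₁ h₂ =>
      simp only [LinearMap.comp_apply, TensorProduct.tmul_add, map_add] at h₁ h₂ ⊢
      rw [h₁, h₂]
  let iX : X ⟶ (MonoidalCategory.tensorObj u Y) := ConcreteCategory.ofHom ⟨i0, fun g => (icomm g).symm⟩
  let rX : (MonoidalCategory.tensorObj u Y) ⟶ X := ConcreteCategory.ofHom ⟨r0, fun g => (rcomm g).symm⟩
  have hiX_rX : iX ≫ rX = 𝟙 X := by
    ext x
    exact hri x
  refine ⟨Y, iX ≫ (iu ▷ Y), (ru ▷ Y) ≫ rX, ?_⟩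
  rw [Category.assoc, ← Category.assoc (iu ▷ Y), ← comp_whiskerRight, hiru,
    id_whiskerRight, Category.id_comp, hiX_rX]


/-- If `char k = p > 0` and `w` has a direct summand `u` whose `k`-dimension is
prime to `p`, then every `kG`-module `X` is `w`-projective. -/
theorem isRelProjective_of_summand_dim_coprime (k G : Type) (p : ℕ) [Field k] [CharP k p]
    (hp : p.Prime) [Group G] [Fintype G]
    (w u : Rep k G) [FiniteDimensional k w.V] [FiniteDimensional k u.V]
    (hu : ∃ (i : u ⟶ w) (r : w ⟶ u), i ≫ r = 𝟙 u)
    (hdim : ¬ (p ∣ Module.finrank k u.V))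
    (X : Rep k G) :
    IsRelProjective w X := by
  exact isRelProjective_aux k G p hp w u hu hdim X
end

section
/- Let k be a field, G a finite group, w a finite-dimensional kG-module, and X any kG-module. Then the evaluation map ev_X : w ⊗_k w* ⊗_k X → X, v ⊗ f ⊗ x ↦ f(v)·x, is a kG-linear P(w)-precover of X: its source w ⊗ w* ⊗ X is w-projective, and every kG-homomorphism Z → X from a w-projective module Z factors through ev_X. (The class P(w) is pre-covering.) -/
open CategoryTheory MonoidalCategory Limits

/-- `f` factors through some `w`-projective module. -/
def FactorsThroughRelProj {k G : Type} [Field k] [Group G] (w : Rep k G)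
    {X Y : Rep k G} (f : X ⟶ Y) : Prop :=
  ∃ (Z : Rep k G) (g : X ⟶ Z) (h : Z ⟶ Y), IsRelProjective w Z ∧ g ≫ h = f

/-- The evaluation map `w ⊗ w* ⊗ X → X`, `v ⊗ f ⊗ x ↦ f(v) • x`, as a `k`-linear map. -/
noncomputable def evLin {k G : Type} [Field k] [Group G] (w X : Rep k G) :
    (((w ⊗ Rep.of w.ρ.dual) ⊗ X).V : Type) →ₗ[k] (X.V : Type) :=
  (TensorProduct.lid k X.V).toLinearMap ∘ₗ
    TensorProduct.map (contractRight k w.V) LinearMap.id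

section Aux

variable {k G : Type} [Field k] [Group G]

lemma evLin_apply (w X : Rep k G) (v : w.V) (ξ : Module.Dual k w.V) (x : X.V) :
    evLin w X ((v ⊗ₜ[k] ξ) ⊗ₜ[k] x) = ξ v • x := by
  show (TensorProduct.lid k X.V).toLinearMap (TensorProduct.map (contractRight k w.V)
      (LinearMap.id (R := k) (M := X.V)) ((v ⊗ₜ[k] ξ) ⊗ₜ[k] x)) = ξ v • x
  rw [TensorProduct.map_tmul]
  simp [contractRight_apply]

lemma dualTensorHom_basisSum {V : Type*} [AddCommGroup V] [Module k V]
    {ι : Type} [Fintype ι] [DecidableEq ι] (b : Module.Basis ι k V) :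
    dualTensorHom k V V (∑ i, b.coord i ⊗ₜ[k] b i) = LinearMap.id := by
  ext v
  simp only [map_sum, dualTensorHom_apply, Module.Basis.coord_apply, LinearMap.id_coe, id_eq,
    LinearMap.coe_sum, Finset.sum_apply]
  exact Module.Basis.sum_repr _ v

lemma coev_invariant (w : Rep k G) {ι : Type} [Fintype ι] [DecidableEq ι]
    (b : Module.Basis ι k w.V) (g : G) :
    (∑ i, (w.ρ.dual g) (b.coord i) ⊗ₜ[k] (w.ρ g) (b i))
      = ∑ i, b.coord i ⊗ₜ[k] b i := by
  haveI : FiniteDimensional k w.V := Module.Finite.of_basis b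
  apply (dualTensorHomEquiv k w.V w.V).injective
  show dualTensorHom k w.V w.V _ = dualTensorHom k w.V w.V _
  have h1 : TensorProduct.map (w.ρ.dual g) (w.ρ g) (∑ i, b.coord i ⊗ₜ[k] b i)
      = ∑ i, (w.ρ.dual g) (b.coord i) ⊗ₜ[k] (w.ρ g) (b i) := by
    rw [map_sum]
    exact Finset.sum_congr rfl fun i _ => TensorProduct.map_tmul _ _ _ _
  rw [← h1]
  have h2 : ∀ t : TensorProduct k (Module.Dual k w.V) w.V,
      dualTensorHom k w.V w.V (TensorProduct.map (w.ρ.dual g) (w.ρ g) t)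
        = (w.ρ g) ∘ₗ (dualTensorHom k w.V w.V t) ∘ₗ (w.ρ g⁻¹) := by
    intro t
    refine TensorProduct.induction_on t (by simp) (fun ξ u => ?_) (fun a c ha hc => ?_)
    · rw [TensorProduct.map_tmul]
      ext x
      show ξ ((w.ρ g⁻¹) x) • (w.ρ g) u = (w.ρ g) (ξ ((w.ρ g⁻¹) x) • u)
      rw [map_smul]
    · simp only [map_add, ha, hc, LinearMap.add_comp, LinearMap.comp_add]
  rw [h2, dualTensorHom_basisSum b]
  ext v
  show (w.ρ g) ((w.ρ g⁻¹) v) = v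
  rw [← Module.End.mul_apply, ← map_mul, mul_inv_cancel, map_one, Module.End.one_apply]

lemma sum_dual_eq (w : Rep k G) {ι : Type} [Fintype ι] [DecidableEq ι]
    (b : Module.Basis ι k w.V) (g : G)
    {M : Type*} [AddCommMonoid M] [Module k M]
    (Ψ : Module.Dual k w.V →ₗ[k] w.V →ₗ[k] M) :
    ∑ i, Ψ ((w.ρ.dual g) (b.coord i)) ((w.ρ g) (b i))
      = ∑ i, Ψ (b.coord i) (b i) := by
  have := congrArg (TensorProduct.lift Ψ) (coev_invariant w b g)
  simpa only [map_sum, TensorProduct.lift.tmul] using this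

/-- The coevaluation-style map `V ⊗ Y₀ → (V ⊗ V*) ⊗ X₀` built from a basis of `V`
and `φ : V ⊗ Y₀ → X₀`. -/
noncomputable def coevMap {V Y₀ X₀ : Type*} [AddCommGroup V] [Module k V]
    [AddCommGroup Y₀] [Module k Y₀] [AddCommGroup X₀] [Module k X₀]
    {ι : Type} [Fintype ι] (b : Module.Basis ι k V)
    (φ : TensorProduct k V Y₀ →ₗ[k] X₀) :
    TensorProduct k V Y₀ →ₗ[k] TensorProduct k (TensorProduct k V (Module.Dual k V)) X₀ :=
  TensorProduct.lift <| LinearMap.mk₂ k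
    (fun v y => ∑ i, (v ⊗ₜ[k] b.coord i) ⊗ₜ[k] φ (b i ⊗ₜ[k] y))
    (fun v₁ v₂ y => by simp [TensorProduct.add_tmul, Finset.sum_add_distrib])
    (fun c v y => by simp [TensorProduct.smul_tmul', Finset.smul_sum])
    (fun v y₁ y₂ => by simp [TensorProduct.tmul_add, Finset.sum_add_distrib])
    (fun c v y => by simp [TensorProduct.tmul_smul, Finset.smul_sum])

lemma coevMap_apply {V Y₀ X₀ : Type*} [AddCommGroup V] [Module k V]
    [AddCommGroup Y₀] [Module k Y₀] [AddCommGroup X₀] [Module k X₀]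
    {ι : Type} [Fintype ι] (b : Module.Basis ι k V)
    (φ : TensorProduct k V Y₀ →ₗ[k] X₀) (v : V) (y : Y₀) :
    coevMap b φ (v ⊗ₜ[k] y) = ∑ i, (v ⊗ₜ[k] b.coord i) ⊗ₜ[k] φ (b i ⊗ₜ[k] y) := by
  simp [coevMap]

/-- Equivariance of the coevaluation-style map. -/
lemma coevMap_comm (w : Rep k G) (Y X : Rep k G)
    {ι : Type} [Fintype ι] [DecidableEq ι] (b : Module.Basis ι k w.V)
    (φ : TensorProduct k w.V Y.V →ₗ[k] (X.V : Type))
    (hφ : ∀ (g : G) (v : w.V) (y : Y.V),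
      φ ((w.ρ g) v ⊗ₜ[k] (Y.ρ g) y) = X.ρ g (φ (v ⊗ₜ[k] y)))
    (g : G) :
    (coevMap b φ) ∘ₗ (TensorProduct.map (w.ρ g) (Y.ρ g))
      = (TensorProduct.map (TensorProduct.map (w.ρ g) (w.ρ.dual g)) (X.ρ g)) ∘ₗ
        (coevMap b φ) := by
  refine TensorProduct.ext' fun (v : w.V) (y : Y.V) => ?_
  show coevMap b φ (TensorProduct.map (w.ρ g) (Y.ρ g) (v ⊗ₜ[k] y))
    = TensorProduct.map (TensorProduct.map (w.ρ g) (w.ρ.dual g)) (X.ρ g)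
      (coevMap b φ (v ⊗ₜ[k] y))
  rw [TensorProduct.map_tmul, coevMap_apply, coevMap_apply, map_sum]
  have hsummand : ∀ i, (TensorProduct.map (TensorProduct.map (w.ρ g) (w.ρ.dual g)) (X.ρ g))
      ((v ⊗ₜ[k] b.coord i) ⊗ₜ[k] φ (b i ⊗ₜ[k] y))
      = ((w.ρ g) v ⊗ₜ[k] (w.ρ.dual g) (b.coord i)) ⊗ₜ[k] φ ((w.ρ g) (b i) ⊗ₜ[k] (Y.ρ g) y) := by
    intro i
    rw [TensorProduct.map_tmul, TensorProduct.map_tmul, hφ]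
  rw [Finset.sum_congr rfl fun i _ => hsummand i]
  -- now use invariance of the coevaluation element
  let Ψ : Module.Dual k w.V →ₗ[k] w.V →ₗ[k]
      TensorProduct k (TensorProduct k w.V (Module.Dual k w.V)) (X.V : Type) :=
    LinearMap.mk₂ k (fun ξ u => ((w.ρ g) v ⊗ₜ[k] ξ) ⊗ₜ[k] φ (u ⊗ₜ[k] (Y.ρ g) y))
      (fun ξ₁ ξ₂ u => by
        rw [TensorProduct.tmul_add, TensorProduct.add_tmul])
      (fun c ξ u => by
        rw [TensorProduct.tmul_smul, ← TensorProduct.smul_tmul'])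
      (fun ξ u₁ u₂ => by
        rw [TensorProduct.add_tmul, map_add, TensorProduct.tmul_add])
      (fun c ξ u => by
        rw [← TensorProduct.smul_tmul', map_smul, TensorProduct.tmul_smul])
  have key := sum_dual_eq w b g Ψ
  simp only [Ψ, LinearMap.mk₂_apply] at key
  exact key.symm

/-- The zig-zag identity: evaluation after the coevaluation-style map gives back `φ`. -/
lemma ev_coevMap (w X Y : Rep k G)
    {ι : Type} [Fintype ι] [DecidableEq ι] (b : Module.Basis ι k w.V)
    (φ : TensorProduct k w.V Y.V →ₗ[k] (X.V : Type)) :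
    ((TensorProduct.lid k (X.V : Type)).toLinearMap ∘ₗ
      TensorProduct.map (contractRight k w.V) LinearMap.id) ∘ₗ (coevMap b φ) = φ := by
  refine TensorProduct.ext' fun (v : w.V) (y : Y.V) => ?_
  show (TensorProduct.lid k (X.V : Type)).toLinearMap
      (TensorProduct.map (contractRight k w.V) LinearMap.id (coevMap b φ (v ⊗ₜ[k] y)))
    = φ (v ⊗ₜ[k] y)
  rw [coevMap_apply, map_sum, map_sum]
  have hsummand : ∀ i, (TensorProduct.lid k (X.V : Type)).toLinearMap
      (TensorProduct.map (contractRight k w.V) LinearMap.id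
        ((v ⊗ₜ[k] b.coord i) ⊗ₜ[k] φ (b i ⊗ₜ[k] y)))
      = b.coord i v • φ (b i ⊗ₜ[k] y) := by
    intro i
    show (TensorProduct.lid k (X.V : Type))
      (TensorProduct.map (contractRight k w.V) LinearMap.id
        ((v ⊗ₜ[k] b.coord i) ⊗ₜ[k] φ (b i ⊗ₜ[k] y))) = _
    rw [TensorProduct.map_tmul]
    simp [contractRight_apply]
  rw [Finset.sum_congr rfl fun i _ => hsummand i]
  have h3 : ∑ i, b.coord i v • φ (b i ⊗ₜ[k] y) = φ ((∑ i, b.coord i v • b i) ⊗ₜ[k] y) := by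
    rw [TensorProduct.sum_tmul, map_sum]
    exact Finset.sum_congr rfl fun i _ => by rw [← TensorProduct.smul_tmul', map_smul]
  have h4 : (∑ i, b.coord i v • b i) = v := by
    simpa [Module.Basis.coord_apply] using b.sum_repr v
  rw [h3, h4]

end Aux

/-- The evaluation map `ev_X : w ⊗ w* ⊗ X → X` is a `kG`-linear `P(w)`-precover of `X`:
it is `G`-equivariant, its source is `w`-projective, and every `kG`-homomorphism from a
`w`-projective module `Z` to `X` factors through it. -/
theorem evaluation_is_precover (k G : Type) [Field k] [Group G] [Fintype G]
    (w : Rep k G) [FiniteDimensional k w.V] (X : Rep k G) :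
    ∃ ε : (w ⊗ Rep.of w.ρ.dual) ⊗ X ⟶ X,
      ε.hom = evLin w X ∧
      IsRelProjective w ((w ⊗ Rep.of w.ρ.dual) ⊗ X) ∧
      ∀ (Z : Rep k G), IsRelProjective w Z →
        ∀ f : Z ⟶ X, ∃ g : Z ⟶ (w ⊗ Rep.of w.ρ.dual) ⊗ X, g ≫ ε = f := by
  classical
  have hcomm : ∀ g : G,
      (evLin w X) ∘ₗ
        (TensorProduct.map (TensorProduct.map (w.ρ g) (w.ρ.dual g)) (X.ρ g))
      = (X.ρ g) ∘ₗ (evLin w X) := by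
    intro g
    show (evLin w X) ∘ₗ
        (TensorProduct.map (TensorProduct.map (w.ρ g) (w.ρ.dual g)) (X.ρ g))
      = (X.ρ g) ∘ₗ (evLin w X)
    refine TensorProduct.ext_threefold fun (v : w.V) (ξ : Module.Dual k w.V) (x : X.V) => ?_
    show evLin w X (TensorProduct.map (TensorProduct.map (w.ρ g) (w.ρ.dual g)) (X.ρ g)
        ((v ⊗ₜ[k] ξ) ⊗ₜ[k] x)) = X.ρ g (evLin w X ((v ⊗ₜ[k] ξ) ⊗ₜ[k] x))
    erw [TensorProduct.map_tmul, TensorProduct.map_tmul, evLin_apply, evLin_apply]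
    rw [map_smul]
    have hv : (w.ρ g⁻¹) ((w.ρ g) v) = v := by
      rw [← Module.End.mul_apply, ← map_mul, inv_mul_cancel, map_one, Module.End.one_apply]
    show ξ ((w.ρ g⁻¹) ((w.ρ g) v)) • (X.ρ g) x = ξ v • (X.ρ g) x
    rw [hv]
  let ε : (w ⊗ Rep.of w.ρ.dual) ⊗ X ⟶ X :=
    ConcreteCategory.ofHom (C := Rep k G) ⟨evLin w X, fun g => hcomm g⟩
  refine ⟨ε, rfl, ?_, ?_⟩
  · -- the source is `w`-projective, via the associator
    exact ⟨Rep.of w.ρ.dual ⊗ X, (α_ w (Rep.of w.ρ.dual) X).hom,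
      (α_ w (Rep.of w.ρ.dual) X).inv, (α_ w (Rep.of w.ρ.dual) X).hom_inv_id⟩
  · -- the precovering property
    rintro Z ⟨Y, i, r, hir⟩ f
    let b := Module.finBasis k w.V
    let φ : TensorProduct k w.V Y.V →ₗ[k] (X.V : Type) := (r ≫ f).hom
    have hφ : ∀ (g : G) (v : w.V) (y : Y.V),
        φ ((w.ρ g) v ⊗ₜ[k] (Y.ρ g) y) = X.ρ g (φ (v ⊗ₜ[k] y)) := by
      intro g v y
      exact Rep.hom_comm_apply (r ≫ f) g (v ⊗ₜ[k] y)
    let h : w ⊗ Y ⟶ (w ⊗ Rep.of w.ρ.dual) ⊗ X :=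
      ConcreteCategory.ofHom (C := Rep k G) ⟨coevMap b φ, fun g => by
          show (coevMap b φ) ∘ₗ (TensorProduct.map (w.ρ g) (Y.ρ g))
            = (TensorProduct.map (TensorProduct.map (w.ρ g) (w.ρ.dual g)) (X.ρ g)) ∘ₗ
              (coevMap b φ)
          exact coevMap_comm w Y X b φ hφ g⟩
    refine ⟨i ≫ h, ?_⟩
    have hhe : h ≫ ε = r ≫ f := by
      apply Rep.hom_ext
      apply Representation.IntertwiningMap.toLinearMap_injective
      show (evLin w X) ∘ₗ (coevMap b φ) = φ
      exact ev_coevMap w X Y b φ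
    rw [Category.assoc, hhe, ← Category.assoc, hir, Category.id_comp]
end

section
/- Let k be a field, G a finite group, w a finite-dimensional kG-module, and c a finite-dimensional kG-module. For any family (X_λ)_{λ ∈ Λ} of kG-modules, the canonical map ⊕_{λ ∈ Λ} Hom_w(c, X_λ) → Hom_w(c, ⊕_{λ ∈ Λ} X_λ) is an isomorphism of k-vector spaces. (Finite-dimensional modules are compact in the relatively stable category StMod_w(kG).) -/
open CategoryTheory MonoidalCategory Limits DirectSum
set_option maxHeartbeats 1000000

/-- The subspace of `Hom_{kG}(X, Y)` of homomorphisms factoring through a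
`w`-projective module. -/
noncomputable abbrev relProjHoms {k G : Type} [Field k] [Group G] (w X Y : Rep k G) :
    Submodule k (X ⟶ Y) :=
  Submodule.span k {f | FactorsThroughRelProj w f}

section Aux
variable {k G : Type} [Field k] [Group G]
variable {Λ : Type} [DecidableEq Λ] (X : Λ → Rep k G)

lemma relProjHoms_comp (w c : Rep k G) {A B : Rep k G} (u : A ⟶ B)
    {f : c ⟶ A} (hf : f ∈ relProjHoms w c A) :
    f ≫ u ∈ relProjHoms w c B := by
  have hle : relProjHoms w c A ≤
      (relProjHoms w c B).comap (Linear.rightComp k c u) := by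
    rw [Submodule.span_le]
    rintro g ⟨Z, a, b, hZ, hg⟩
    exact Submodule.subset_span ⟨Z, a, b ≫ u, hZ, by rw [← hg]; simp⟩
  exact hle hf

noncomputable def crProj (l : Λ) : (∐ X) ⟶ X l :=
  Sigma.desc (fun j => if h : j = l then eqToHom (by rw [h]) else 0)

lemma crProj_ι_self (l : Λ) : Sigma.ι X l ≫ crProj X l = 𝟙 (X l) := by
  simp [crProj]

lemma crProj_ι_ne {j l : Λ} (h : j ≠ l) : Sigma.ι X j ≫ crProj X l = 0 := by
  simp [crProj, h]

noncomputable def modelIso :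
    (forget₂ (Rep k G) (ModuleCat k)).obj (∐ X) ≅
      ModuleCat.of k (⨁ l, (X l).V) :=
  preservesColimitIso (forget₂ (Rep k G) (ModuleCat k)) (Discrete.functor X) ≪≫
    HasColimit.isoOfNatIso (Discrete.natIso fun ⟨l⟩ => Iso.refl (ModuleCat.of k (X l).V)) ≪≫
    ModuleCat.coprodIsoDirectSum (fun l => ModuleCat.of k (X l).V)

lemma ι_modelIso (l : Λ) :
    (forget₂ (Rep k G) (ModuleCat k)).map (Sigma.ι X l) ≫ (modelIso X).hom =
      ModuleCat.ofHom (DirectSum.lof k Λ (fun l => (X l).V) l) := by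
  rw [modelIso, Iso.trans_hom, Iso.trans_hom]
  rw [show Sigma.ι X l = colimit.ι (Discrete.functor X) ⟨l⟩ from rfl,
    ι_preservesColimitIso_hom_assoc, HasColimit.isoOfNatIso_ι_hom_assoc]
  simp


lemma modelIso_crProj (l : Λ) :
    (modelIso X).hom ≫ ModuleCat.ofHom (DirectSum.component k Λ (fun l => (X l).V) l) =
      (forget₂ (Rep k G) (ModuleCat k)).map (crProj X l) := by
  apply (isColimitOfPreserves (forget₂ (Rep k G) (ModuleCat k))
    (colimit.isColimit (Discrete.functor X))).hom_ext
  rintro ⟨j⟩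
  show (forget₂ (Rep k G) (ModuleCat k)).map (Sigma.ι X j) ≫ _ =
    (forget₂ (Rep k G) (ModuleCat k)).map (Sigma.ι X j) ≫ _
  rw [← Category.assoc, ι_modelIso, ← Functor.map_comp]
  by_cases h : j = l
  · subst h
    rw [crProj_ι_self, CategoryTheory.Functor.map_id]
    refine ModuleCat.hom_ext (LinearMap.ext fun x => ?_)
    show DirectSum.component k Λ (fun l => (X l).V) j
      (DirectSum.lof k Λ (fun l => (X l).V) j x) = x
    exact DirectSum.component.lof_self (R := k) (M := fun l => ((X l).V : Type)) j x
  · rw [crProj_ι_ne X h, Functor.map_zero]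
    refine ModuleCat.hom_ext (LinearMap.ext fun x => ?_)
    show DirectSum.component k Λ (fun l => (X l).V) l
      (DirectSum.lof k Λ (fun l => (X l).V) j x) = 0
    rw [DirectSum.component.of, dif_neg h]

lemma exists_finite_factor (c : Rep.{0} k G) [FiniteDimensional k c.V] (f : c ⟶ ∐ X) :
    ∃ S : Finset Λ, f = ∑ l ∈ S, (f ≫ crProj X l) ≫ Sigma.ι X l := by
  classical
  set F := forget₂ (Rep k G) (ModuleCat k) with hF
  set φ : c.V →ₗ[k] ⨁ l, ((X l).V : Type) :=
    (F.map f ≫ (modelIso X).hom).hom with hφ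
  obtain ⟨t, ht⟩ : (⊤ : Submodule k c.V).FG := Module.finite_def.mp inferInstance
  set S : Finset Λ := t.sup fun x => (φ x).support with hS
  have hsub : ∀ x : c.V, (φ x).support ⊆ S := by
    let T : Submodule k c.V :=
      { carrier := {x | (φ x).support ⊆ S}
        add_mem' := fun {a b} ha hb => by
          simp only [Set.mem_setOf_eq, map_add] at *
          exact DFinsupp.support_add.trans (Finset.union_subset ha hb)
        zero_mem' := by simp [Set.mem_setOf_eq, map_zero]
        smul_mem' := fun r a ha => by
          simp only [Set.mem_setOf_eq, map_smul] at *
          exact (DFinsupp.support_smul r (φ a)).trans ha }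
    intro x
    have hle : (⊤ : Submodule k c.V) ≤ T := by
      rw [← ht]
      refine Submodule.span_le.mpr fun y hy => ?_
      show (φ y).support ⊆ S
      exact Finset.le_sup (f := fun x => (φ x).support) hy
    exact hle trivial
  refine ⟨S, F.map_injective ?_⟩
  rw [← cancel_mono (modelIso X).hom, Functor.map_sum, Preadditive.sum_comp]
  have hterm : ∀ l : Λ, F.map ((f ≫ crProj X l) ≫ Sigma.ι X l) ≫ (modelIso X).hom
      = (F.map f ≫ (modelIso X).hom) ≫
          ModuleCat.ofHom ((DirectSum.lof k Λ (fun l => ((X l).V : Type)) l).comp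
            (DirectSum.component k Λ (fun l => ((X l).V : Type)) l)) := by
    intro l
    rw [Functor.map_comp, Functor.map_comp, Category.assoc, ι_modelIso, ← modelIso_crProj]
    refine ModuleCat.hom_ext (LinearMap.ext fun x => ?_)
    rfl
  rw [Finset.sum_congr rfl fun l _ => hterm l]
  refine ModuleCat.hom_ext (LinearMap.ext fun x => ?_)
  have hx : φ x = ∑ l ∈ S, DirectSum.lof k Λ (fun l => ((X l).V : Type)) l (φ x l) := by
    conv_lhs => rw [← DirectSum.sum_support_of (φ x)]
    rw [Finset.sum_subset (hsub x) (fun l _ hl => by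
      rw [DFinsupp.notMem_support_iff.mp hl, map_zero])]
    exact Finset.sum_congr rfl fun l _ => by rw [DirectSum.lof_eq_of]
  show φ x = _
  rw [hx, ModuleCat.hom_sum, LinearMap.sum_apply]
  rfl

variable (w c : Rep k G)

/-- The map on quotients induced by composition with the coproduct inclusion. -/
noncomputable def qmap (l : Λ) : ((c ⟶ X l) ⧸ relProjHoms w c (X l)) →ₗ[k]
    ((c ⟶ ∐ X) ⧸ relProjHoms w c (∐ X)) :=
  Submodule.mapQ _ _ (Linear.rightComp k c (Sigma.ι X l))
    (fun _ hf => relProjHoms_comp w c (Sigma.ι X l) hf)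

lemma qmap_mk (l : Λ) (f : c ⟶ X l) :
    qmap X w c l (Submodule.Quotient.mk f) = Submodule.Quotient.mk (f ≫ Sigma.ι X l) := by
  rw [qmap]
  rfl

/-- The total map on quotients. -/
noncomputable def Ftot : (DirectSum Λ fun l => ((c ⟶ X l) ⧸ relProjHoms w c (X l))) →ₗ[k]
    ((c ⟶ ∐ X) ⧸ relProjHoms w c (∐ X)) :=
  DirectSum.toModule k Λ _ (qmap X w c)

lemma Ftot_lof (l : Λ) (a : (c ⟶ X l) ⧸ relProjHoms w c (X l)) :
    Ftot X w c (DirectSum.lof k Λ (fun l => ((c ⟶ X l) ⧸ relProjHoms w c (X l))) l a) =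
      qmap X w c l a := by
  simp only [Ftot, DirectSum.toModule_lof]

/-- The total map on Hom spaces. -/
noncomputable def Phi : (DirectSum Λ fun l => (c ⟶ X l)) →ₗ[k] (c ⟶ ∐ X) :=
  DirectSum.toModule k Λ _ (fun l => Linear.rightComp k c (Sigma.ι X l))

lemma Phi_lof (l : Λ) (f : c ⟶ X l) :
    Phi X c (DirectSum.lof k Λ (fun l => (c ⟶ X l)) l f) = f ≫ Sigma.ι X l := by
  simp only [Phi, DirectSum.toModule_lof, Linear.rightComp_apply]

/-- The direct sum of the quotient maps. -/
noncomputable def Psi : (DirectSum Λ fun l => (c ⟶ X l)) →ₗ[k]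
    (DirectSum Λ fun l => ((c ⟶ X l) ⧸ relProjHoms w c (X l))) :=
  DirectSum.toModule k Λ _ (fun l =>
    (DirectSum.lof k Λ (fun l => ((c ⟶ X l) ⧸ relProjHoms w c (X l))) l).comp
      (relProjHoms w c (X l)).mkQ)

lemma Psi_lof (l : Λ) (f : c ⟶ X l) :
    Psi X w c (DirectSum.lof k Λ (fun l => (c ⟶ X l)) l f) =
      DirectSum.lof k Λ (fun l => ((c ⟶ X l) ⧸ relProjHoms w c (X l))) l
        (Submodule.Quotient.mk f) := by
  simp only [Psi, DirectSum.toModule_lof]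
  rfl

lemma Psi_surjective : Function.Surjective (Psi X w c) := by
  intro x
  induction x using DirectSum.induction_on with
  | zero => exact ⟨0, map_zero _⟩
  | of l a =>
    obtain ⟨m, rfl⟩ := Submodule.Quotient.mk_surjective _ a
    exact ⟨DirectSum.lof k Λ (fun l => (c ⟶ X l)) l m,
      (Psi_lof X w c l m).trans (by rw [DirectSum.lof_eq_of])⟩
  | add a b ha hb =>
    obtain ⟨ya, hya⟩ := ha
    obtain ⟨yb, hyb⟩ := hb
    exact ⟨ya + yb, by rw [map_add, hya, hyb]⟩

lemma Ftot_Psi (y : DirectSum Λ fun l => (c ⟶ X l)) :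
    Ftot X w c (Psi X w c y) = Submodule.Quotient.mk (Phi X c y) := by
  have h : (Ftot X w c).comp (Psi X w c) = (relProjHoms w c (∐ X)).mkQ.comp (Phi X c) := by
    refine DirectSum.linearMap_ext k fun l => ?_
    refine LinearMap.ext fun m => ?_
    simp only [LinearMap.comp_apply, Psi_lof, Ftot_lof, Phi_lof, qmap_mk, Submodule.mkQ_apply]
  exact congrArg (fun g => g y) h |>.trans rfl

lemma Phi_proj (y : DirectSum Λ fun l => (c ⟶ X l)) (l : Λ) :
    (Phi X c y) ≫ crProj X l = y l := by
  have h : (Linear.rightComp k c (crProj X l)).comp (Phi X c) =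
      DirectSum.component k Λ (fun l => (c ⟶ X l)) l := by
    refine DirectSum.linearMap_ext k fun j => ?_
    refine LinearMap.ext fun m => ?_
    simp only [LinearMap.comp_apply, Phi_lof, Linear.rightComp_apply]
    by_cases hjl : j = l
    · subst hjl
      rw [Category.assoc, crProj_ι_self, Category.comp_id]
      exact (DirectSum.component.lof_self (R := k) (M := fun l => (c ⟶ X l)) j m).symm
    · rw [Category.assoc, crProj_ι_ne X hjl, Limits.comp_zero,
        DirectSum.component.of, dif_neg hjl]
  exact (congrArg (fun g => g y) h |>.trans rfl).symm ▸ rfl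

lemma Psi_apply (y : DirectSum Λ fun l => (c ⟶ X l)) (l : Λ) :
    (Psi X w c y) l = Submodule.Quotient.mk (y l) := by
  have h : (DirectSum.component k Λ
        (fun l => ((c ⟶ X l) ⧸ relProjHoms w c (X l))) l).comp (Psi X w c) =
      (relProjHoms w c (X l)).mkQ.comp
        (DirectSum.component k Λ (fun l => (c ⟶ X l)) l) := by
    refine DirectSum.linearMap_ext k fun j => ?_
    refine LinearMap.ext fun m => ?_
    simp only [LinearMap.comp_apply, Psi_lof]
    rw [DirectSum.component.of, DirectSum.component.of]
    by_cases hjl : j = l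
    · subst hjl; rw [dif_pos rfl, dif_pos rfl]; rfl
    · rw [dif_neg hjl, dif_neg hjl, map_zero]
  exact congrArg (fun g => g y) h |>.trans rfl

end Aux

/-- Finite-dimensional modules are compact in the relatively stable category: for a
finite-dimensional `c` and any family `(X_λ)`, the canonical map
`⊕_λ Hom_w(c, X_λ) → Hom_w(c, ⊕_λ X_λ)` (induced by composition with the coproduct
inclusions) is an isomorphism of `k`-vector spaces, where `Hom_w` denotes the quotient
of `Hom_{kG}` by the homomorphisms factoring through a `w`-projective module. -/
theorem finiteDimensional_compact_relStable (k G : Type) [Field k] [Group G] [Fintype G]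
    (w : Rep k G) [FiniteDimensional k w.V]
    (c : Rep k G) [FiniteDimensional k c.V]
    {Λ : Type} [DecidableEq Λ] (X : Λ → Rep k G) :
    ∃ e : (DirectSum Λ fun l => ((c ⟶ X l) ⧸ relProjHoms w c (X l))) ≃ₗ[k]
        ((c ⟶ ∐ X) ⧸ relProjHoms w c (∐ X)),
      ∀ (l : Λ) (f : c ⟶ X l),
        e (DirectSum.of (fun l => ((c ⟶ X l) ⧸ relProjHoms w c (X l))) l
            (Submodule.Quotient.mk f)) =
          Submodule.Quotient.mk (f ≫ Sigma.ι X l) := by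
  classical
  have hFof : ∀ (l : Λ) (f : c ⟶ X l),
      Ftot X w c (DirectSum.of (fun l => ((c ⟶ X l) ⧸ relProjHoms w c (X l))) l
          (Submodule.Quotient.mk f)) =
        Submodule.Quotient.mk (f ≫ Sigma.ι X l) := by
    intro l f
    rw [← DirectSum.lof_eq_of k, Ftot_lof, qmap_mk]
  have hinj : Function.Injective (Ftot X w c) := by
    have h0 : ∀ x, Ftot X w c x = 0 → x = 0 := by
      intro x hx0
      obtain ⟨y, rfl⟩ := Psi_surjective X w c x
      rw [Ftot_Psi] at hx0
      have hmem : Phi X c y ∈ relProjHoms w c (∐ X) :=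
        (Submodule.Quotient.mk_eq_zero _).mp hx0
      refine DFinsupp.ext fun l => ?_
      rw [Psi_apply X w c y l]
      have hyl : y l ∈ relProjHoms w c (X l) := by
        rw [← Phi_proj X c y l]
        exact relProjHoms_comp w c (crProj X l) hmem
      rw [(Submodule.Quotient.mk_eq_zero _).mpr hyl]
      rfl
    intro a b hab
    exact sub_eq_zero.mp (h0 (a - b) (by rw [map_sub, hab, sub_self]))
  have hsurj : Function.Surjective (Ftot X w c) := by
    intro z
    obtain ⟨f, rfl⟩ := Submodule.Quotient.mk_surjective _ z
    obtain ⟨S, hf⟩ := exists_finite_factor X c f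
    refine ⟨∑ l ∈ S, DirectSum.of (fun l => ((c ⟶ X l) ⧸ relProjHoms w c (X l))) l
      (Submodule.Quotient.mk (f ≫ crProj X l)), ?_⟩
    rw [map_sum]
    calc ∑ l ∈ S, Ftot X w c (DirectSum.of (fun l => ((c ⟶ X l) ⧸ relProjHoms w c (X l))) l
          (Submodule.Quotient.mk (f ≫ crProj X l)))
        = ∑ l ∈ S, (relProjHoms w c (∐ X)).mkQ ((f ≫ crProj X l) ≫ Sigma.ι X l) :=
          Finset.sum_congr rfl fun l _ => hFof l _
      _ = (relProjHoms w c (∐ X)).mkQ (∑ l ∈ S, (f ≫ crProj X l) ≫ Sigma.ι X l) :=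
          (map_sum _ _ _).symm
      _ = Submodule.Quotient.mk f := by rw [← hf]; rfl
  exact ⟨LinearEquiv.ofBijective (Ftot X w c) ⟨hinj, hsurj⟩, hFof⟩
end
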